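/- Let K be a field and let φ be a z-automorphism of the free associative algebra K⟨x,y,z⟩ which is linear in x and y. Then the automorphism of the polynomial algebra K[x,y,z] induced by φ via the abelianization homomorphism K⟨x,y,z⟩ → K[x,y,z] is a tame automorphism of K[x,y,z]. -/

import Mathlib

noncomputable section

open FreeAlgebra MvPolynomial

variable (K : Type*) [Field K]

/-- Affine automorphisms of `K[x,y,z]`. -/
def IsAffine3 (φ : MvPolynomial (Fin 3) K ≃ₐ[K] MvPolynomial (Fin 3) K) : Prop :=
  ∃ (a : Matrix (Fin 3) (Fin 3) K) (b : Fin 3 → K),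
    IsUnit a.det ∧ ∀ j, φ (X j) = (∑ i, C (a i j) * X i) + C (b j)

/-- Triangular automorphisms of `K[x,y,z]`. -/
def IsTriangular3 (φ : MvPolynomial (Fin 3) K ≃ₐ[K] MvPolynomial (Fin 3) K) : Prop :=
  ∃ (α₁ α₂ α₃ : Kˣ) (p₁ : MvPolynomial (Fin 2) K) (p₂ : Polynomial K) (β : K),
    φ (X 0) = C (α₁ : K) * X 0 + aeval ![X 1, X 2] p₁ ∧
    φ (X 1) = C (α₂ : K) * X 1 + Polynomial.aeval (X 2) p₂ ∧
    φ (X 2) = C (α₃ : K) * X 2 + C β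

/-- The subgroup of tame automorphisms of `K[x,y,z]`. -/
def Tame3 : Subgroup (MvPolynomial (Fin 3) K ≃ₐ[K] MvPolynomial (Fin 3) K) :=
  Subgroup.closure {φ | IsAffine3 K φ ∨ IsTriangular3 K φ}

/-- The element `Σ αᵢⱼ zⁱxzʲ + Σ βᵢⱼ zⁱyzʲ` of `K⟨x,y,z⟩` associated with the pair of
polynomials `p = Σ αᵢⱼ z₁ⁱz₂ʲ` and `q = Σ βᵢⱼ z₁ⁱz₂ʲ` in `K[z₁,z₂]`. -/
def linF (p q : MvPolynomial (Fin 2) K) : FreeAlgebra K (Fin 3) :=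
  (∑ m ∈ p.support, p.coeff m •
    (ι K (2 : Fin 3) ^ m 0 * ι K (0 : Fin 3) * ι K (2 : Fin 3) ^ m 1)) +
  (∑ m ∈ q.support, q.coeff m •
    (ι K (2 : Fin 3) ^ m 0 * ι K (1 : Fin 3) * ι K (2 : Fin 3) ^ m 1))

/-- The abelianization homomorphism `K⟨x,y,z⟩ → K[x,y,z]`. -/
def abel3 : FreeAlgebra K (Fin 3) →ₐ[K] MvPolynomial (Fin 3) K :=
  FreeAlgebra.lift K (fun i => MvPolynomial.X i)

abbrev R3 := MvPolynomial (Fin 3) K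

def zet : Polynomial K →ₐ[K] R3 K := Polynomial.aeval (X 2)
def piz : R3 K →ₐ[K] Polynomial K := aeval ![0, 0, Polynomial.X]

lemma piz_zet (g : Polynomial K) : piz K (zet K g) = g := by
  rw [zet, ← Polynomial.aeval_algHom_apply]
  simp [piz]

lemma algHom_zet (ψ : R3 K →ₐ[K] R3 K) (h : ψ (X 2) = X 2) (g : Polynomial K) :
    ψ (zet K g) = zet K g := by
  rw [zet, ← Polynomial.aeval_algHom_apply, h]

lemma pderiv_zet (i : Fin 3) (hi : i ≠ 2) (g : Polynomial K) :
    pderiv i (zet K g) = 0 := by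
  induction g using Polynomial.induction_on' with
  | add p q hp hq => simp [map_add, hp, hq]
  | monomial n a =>
    simp only [zet, Polynomial.aeval_monomial]
    simp [pderiv_X_of_ne hi, Pi.single_eq_of_ne (Ne.symm hi)]

lemma chain_rule (f : Fin 3 → R3 K) (j : Fin 3) (F : R3 K) :
    pderiv j (aeval f F) = ∑ i, aeval f (pderiv i F) * pderiv j (f i) := by
  induction F using MvPolynomial.induction_on with
  | C a => simp
  | add p q hp hq => simp only [map_add, hp, hq, add_mul, Finset.sum_add_distrib]
  | mul_X p i hp =>
    simp only [map_mul, aeval_X, pderiv_mul, hp, pderiv_X, Pi.single_apply, map_add,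
      add_mul, Finset.sum_add_distrib, Finset.sum_mul, mul_ite, ite_mul, mul_one, mul_zero,
      zero_mul, apply_ite (aeval f), map_one, map_zero, Finset.sum_ite_eq, Finset.mem_univ,
      if_true, one_mul]
    congr 1; exact Finset.sum_congr rfl fun k _ => by ring


def swap3 : R3 K ≃ₐ[K] R3 K := MvPolynomial.renameEquiv K (Equiv.swap (0 : Fin 3) 1)

lemma swap3_X0 : swap3 K (X 0) = X 1 := by simp [swap3]
lemma swap3_X1 : swap3 K (X 1) = X 0 := by simp [swap3]
lemma swap3_X2 : swap3 K (X 2) = X 2 := by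
  simp [swap3, Equiv.swap_apply_of_ne_of_ne (by decide : (2:Fin 3) ≠ 0) (by decide : (2:Fin 3) ≠ 1)]

lemma swap3_tame : swap3 K ∈ Tame3 K := by
  apply Subgroup.subset_closure
  left
  refine ⟨![![0,1,0],![1,0,0],![0,0,1]], ![0,0,0], ?_, ?_⟩
  · rw [show (![![0,1,0],![1,0,0],![0,0,1]] : Matrix (Fin 3) (Fin 3) K) =
      Matrix.of ![![0,1,0],![1,0,0],![0,0,1]] from rfl, Matrix.det_fin_three]; simp
  · intro j
    fin_cases j <;>
      · rw [show ∀ v, X v = (X v : R3 K) from fun _ => rfl]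
        simp [swap3_X0, swap3_X1, swap3_X2, Fin.sum_univ_three, swap3, Matrix.vecHead, Matrix.vecTail,
          Equiv.swap_apply_of_ne_of_ne (by decide : (2:Fin 3) ≠ 0) (by decide : (2:Fin 3) ≠ 1)]

def tauHom (g : Polynomial K) : R3 K →ₐ[K] R3 K := aeval ![X 0 + zet K g * X 1, X 1, X 2]

lemma tauHom_X0 (g : Polynomial K) : tauHom K g (X 0) = X 0 + zet K g * X 1 := by simp [tauHom]
lemma tauHom_X1 (g : Polynomial K) : tauHom K g (X 1) = X 1 := by simp [tauHom]
lemma tauHom_X2 (g : Polynomial K) : tauHom K g (X 2) = X 2 := by simp [tauHom]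

lemma tauHom_zet (g h : Polynomial K) : tauHom K g (zet K h) = zet K h :=
  algHom_zet K _ (tauHom_X2 K g) h

lemma tauHom_comp (g h : Polynomial K) :
    (tauHom K g).comp (tauHom K h) = tauHom K (g + h) := by
  apply MvPolynomial.algHom_ext
  intro i
  fin_cases i <;>
    simp [tauHom_X0, tauHom_X1, tauHom_X2, tauHom_zet, map_add, add_mul, add_assoc]

lemma tauHom_id : tauHom K 0 = AlgHom.id K (R3 K) := by
  apply MvPolynomial.algHom_ext
  intro i
  fin_cases i <;> simp [tauHom]

def tau (g : Polynomial K) : R3 K ≃ₐ[K] R3 K :=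
  AlgEquiv.ofAlgHom (tauHom K g) (tauHom K (-g))
    (by rw [tauHom_comp]; simp [tauHom_id])
    (by rw [tauHom_comp]; simp [tauHom_id])

lemma tau_X0 (g : Polynomial K) : tau K g (X 0) = X 0 + zet K g * X 1 := tauHom_X0 K g
lemma tau_X1 (g : Polynomial K) : tau K g (X 1) = X 1 := tauHom_X1 K g
lemma tau_X2 (g : Polynomial K) : tau K g (X 2) = X 2 := tauHom_X2 K g

lemma zet_poly_aeval (B : Polynomial K) :
    aeval ![(X 1 : R3 K), X 2] ((Polynomial.aeval (X 1 : MvPolynomial (Fin 2) K)) B * X 0)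
      = zet K B * X 1 := by
  rw [map_mul, ← Polynomial.aeval_algHom_apply]
  simp [zet, mul_comm]

lemma tau_tame (g : Polynomial K) : tau K g ∈ Tame3 K := by
  apply Subgroup.subset_closure
  right
  refine ⟨1, 1, 1, Polynomial.aeval (X 1 : MvPolynomial (Fin 2) K) g * X 0, 0, 0, ?_, ?_, ?_⟩
  · rw [zet_poly_aeval, tau_X0]; simp
  · simp [tau_X1]
  · simp [tau_X2]

lemma terminal_tame (ψ : R3 K ≃ₐ[K] R3 K) (A B D : Polynomial K)
    (hdet : IsUnit (A * D))
    (h0 : ψ (X 0) = zet K A * X 0 + zet K B * X 1)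
    (h1 : ψ (X 1) = zet K D * X 1)
    (h2 : ψ (X 2) = X 2) : ψ ∈ Tame3 K := by
  apply Subgroup.subset_closure
  right
  obtain ⟨a, ha, hA⟩ := Polynomial.isUnit_iff.mp (isUnit_of_mul_isUnit_left hdet)
  obtain ⟨d, hd, hD⟩ := Polynomial.isUnit_iff.mp (isUnit_of_mul_isUnit_right hdet)
  refine ⟨ha.unit, hd.unit, 1, Polynomial.aeval (X 1 : MvPolynomial (Fin 2) K) B * X 0, 0, 0,
    ?_, ?_, ?_⟩
  · rw [zet_poly_aeval, h0, ← hA]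
    simp [zet, add_comm]
  · rw [h1, ← hD]
    simp [zet]
  · simp [h2]

lemma equiv_zet (ψ : R3 K ≃ₐ[K] R3 K) (h : ψ (X 2) = X 2) (g : Polynomial K) :
    ψ (zet K g) = zet K g := algHom_zet K ψ.toAlgHom h g

lemma key_tame : ∀ (n : ℕ) (ψ : R3 K ≃ₐ[K] R3 K) (A B C D : Polynomial K),
    C.natDegree ≤ n → IsUnit (A * D - B * C) →
    ψ (X 0) = zet K A * X 0 + zet K B * X 1 →
    ψ (X 1) = zet K C * X 0 + zet K D * X 1 →
    ψ (X 2) = X 2 → ψ ∈ Tame3 K := by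
  intro n
  induction n using Nat.strong_induction_on with
  | _ n IH =>
  intro ψ A B C D hn hdet h0 h1 h2
  by_cases hC : C = 0
  · refine terminal_tame K ψ A B D ?_ h0 ?_ h2
    · simpa [hC] using hdet
    · rw [h1, hC]; simp
  set q := A / C with hq
  set r := A % C with hr
  have hA : C * q + r = A := by rw [mul_comm]; exact EuclideanDomain.div_add_mod' A C
  set ψ' := ψ * tau K (-q) * swap3 K with hψ'def
  have e0 : ψ' (X 0) = zet K C * X 0 + zet K D * X 1 := by
    show ψ (tau K (-q) (swap3 K (X 0))) = _
    rw [swap3_X0, tau_X1, h1]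
  have e1 : ψ' (X 1) = zet K r * X 0 + zet K (B - q * D) * X 1 := by
    show ψ (tau K (-q) (swap3 K (X 1))) = _
    rw [swap3_X1, tau_X0, map_add, map_mul, equiv_zet K ψ h2, h0, h1]
    rw [show r = A - C * q by rw [← hA]; ring]
    simp only [map_sub, map_neg, map_mul]
    ring
  have e2 : ψ' (X 2) = X 2 := by
    show ψ (tau K (-q) (swap3 K (X 2))) = _
    rw [swap3_X2, tau_X2, h2]
  have hdet' : IsUnit (C * (B - q * D) - D * r) := by
    have : C * (B - q * D) - D * r = -(A * D - B * C) := by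
      rw [show r = A - C * q by rw [← hA]; ring]; ring
    rw [this]
    exact hdet.neg
  have hψ' : ψ' ∈ Tame3 K := by
    by_cases hr0 : r = 0
    · refine terminal_tame K ψ' C D (B - q * D) ?_ e0 ?_ e2
      · simpa [hr0] using hdet'
      · rw [e1, hr0]; simp
    · have hrdeg : r.natDegree < C.natDegree :=
        Polynomial.natDegree_lt_natDegree hr0 (EuclideanDomain.mod_lt A hC)
      exact IH r.natDegree (lt_of_lt_of_le hrdeg hn) ψ' C D r (B - q * D) le_rfl hdet' e0 e1 e2
  have hfac : ψ = ψ' * (swap3 K)⁻¹ * (tau K (-q))⁻¹ := by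
    rw [hψ'def]; group
  rw [hfac]
  exact mul_mem (mul_mem hψ' (inv_mem (swap3_tame K))) (inv_mem (tau_tame K (-q)))

def Az (p : MvPolynomial (Fin 2) K) : Polynomial K := aeval ![Polynomial.X, Polynomial.X] p

lemma zet_Az (p : MvPolynomial (Fin 2) K) : zet K (Az K p) = aeval ![(X 2 : R3 K), X 2] p := by
  rw [Az, comp_aeval_apply]
  have h : (fun i => zet K (![Polynomial.X, Polynomial.X] i)) = ![(X 2 : R3 K), X 2] := by
    funext i; fin_cases i <;> simp [zet]
  rw [h]

lemma abel3_sum (p : MvPolynomial (Fin 2) K) (v : Fin 3) :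
    abel3 K (∑ m ∈ p.support, p.coeff m • (ι K (2:Fin 3) ^ m 0 * ι K v * ι K (2:Fin 3) ^ m 1))
      = aeval ![(X 2 : R3 K), X 2] p * X v := by
  rw [map_sum, aeval_def, eval₂_eq', Finset.sum_mul]
  apply Finset.sum_congr rfl
  intro m _
  rw [map_smul, map_mul, map_mul, map_pow, map_pow]
  simp only [abel3, lift_ι_apply, Fin.prod_univ_two, Matrix.cons_val_zero, Matrix.cons_val_one,
    Matrix.head_cons, algebraMap_eq, smul_eq_C_mul]
  ring

lemma abel3_linF (p q : MvPolynomial (Fin 2) K) :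
    abel3 K (linF K p q) = zet K (Az K p) * X 0 + zet K (Az K q) * X 1 := by
  rw [linF, map_add, abel3_sum, abel3_sum, zet_Az, zet_Az]

lemma abel3_ι (i : Fin 3) : abel3 K (ι K i) = X i := FreeAlgebra.lift_ι_apply _ _

lemma pderiv_lin0 (a b : Polynomial K) :
    pderiv (0:Fin 3) (zet K a * X 0 + zet K b * X 1) = zet K a := by
  simp [pderiv_zet K 0 (by decide), pderiv_X_of_ne (show (1:Fin 3) ≠ 0 by decide)]

lemma pderiv_lin1 (a b : Polynomial K) :
    pderiv (1:Fin 3) (zet K a * X 0 + zet K b * X 1) = zet K b := by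
  simp [pderiv_zet K 1 (by decide), pderiv_X_of_ne (show (0:Fin 3) ≠ 1 by decide)]

/-- Drensky–Yu: every `z`-automorphism of `K⟨x,y,z⟩` which is linear in `x` and `y` induces
a tame automorphism of the polynomial algebra `K[x,y,z]`. -/
theorem linear_z_automorphism_induces_tame_automorphism
    (φ : FreeAlgebra K (Fin 3) ≃ₐ[K] FreeAlgebra K (Fin 3))
    (hz : φ (ι K 2) = ι K 2)
    (p q r s : MvPolynomial (Fin 2) K)
    (hf : φ (ι K 0) = linF K p q) (hg : φ (ι K 1) = linF K r s) :
    ∃ ψ : MvPolynomial (Fin 3) K ≃ₐ[K] MvPolynomial (Fin 3) K,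
      (∀ u : FreeAlgebra K (Fin 3), ψ (abel3 K u) = abel3 K (φ u)) ∧
      ψ ∈ Tame3 K := by
  set e : R3 K →ₐ[K] R3 K := aeval (fun i => abel3 K (φ (ι K i))) with he
  set e' : R3 K →ₐ[K] R3 K := aeval (fun i => abel3 K (φ.symm (ι K i))) with he'
  have hcomm : ∀ u, e (abel3 K u) = abel3 K (φ u) := by
    intro u
    have h : e.comp (abel3 K) = (abel3 K).comp φ.toAlgHom := by
      apply FreeAlgebra.hom_ext
      funext i
      show e (abel3 K (ι K i)) = abel3 K (φ (ι K i))
      rw [abel3_ι, he, aeval_X]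
    exact DFunLike.congr_fun h u
  have hcomm' : ∀ u, e' (abel3 K u) = abel3 K (φ.symm u) := by
    intro u
    have h : e'.comp (abel3 K) = (abel3 K).comp φ.symm.toAlgHom := by
      apply FreeAlgebra.hom_ext
      funext i
      show e' (abel3 K (ι K i)) = abel3 K (φ.symm (ι K i))
      rw [abel3_ι, he', aeval_X]
    exact DFunLike.congr_fun h u
  have hee' : e.comp e' = AlgHom.id K (R3 K) := by
    apply MvPolynomial.algHom_ext
    intro i
    show e (e' (X i)) = X i
    rw [← abel3_ι K i, hcomm', hcomm, φ.apply_symm_apply]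
  have he'e : e'.comp e = AlgHom.id K (R3 K) := by
    apply MvPolynomial.algHom_ext
    intro i
    show e' (e (X i)) = X i
    rw [← abel3_ι K i, hcomm, hcomm', φ.symm_apply_apply]
  set Ψ : R3 K ≃ₐ[K] R3 K := AlgEquiv.ofAlgHom e e' hee' he'e with hΨ
  set a1 := Az K p; set b1 := Az K q; set c1 := Az K r; set d1 := Az K s
  set f : Fin 3 → R3 K :=
    ![zet K a1 * X 0 + zet K b1 * X 1, zet K c1 * X 0 + zet K d1 * X 1, X 2] with hfdef
  have hfi : (fun i => abel3 K (φ (ι K i))) = f := by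
    funext i
    fin_cases i
    · show abel3 K (φ (ι K 0)) = zet K (Az K p) * X 0 + zet K (Az K q) * X 1
      rw [hf, abel3_linF]
    · show abel3 K (φ (ι K 1)) = zet K (Az K r) * X 0 + zet K (Az K s) * X 1
      rw [hg, abel3_linF]
    · show abel3 K (φ (ι K 2)) = X 2
      rw [hz, abel3_ι]
  have hΨf : ∀ u, Ψ u = aeval f u := by
    intro u
    show e u = _
    rw [he, hfi]
  have hf0 : f 0 = zet K a1 * X 0 + zet K b1 * X 1 := rfl
  have hf1 : f 1 = zet K c1 * X 0 + zet K d1 * X 1 := rfl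
  have hf2 : f 2 = X 2 := rfl
  -- derive the determinant condition
  have main : ∀ v : Fin 3, ∃ x0 x1 : Polynomial K,
      (x0 * a1 + x1 * c1 = piz K (pderiv 0 (X v))) ∧
      (x0 * b1 + x1 * d1 = piz K (pderiv 1 (X v))) := by
    intro v
    set F := Ψ.symm (X v) with hFdef
    have hF : aeval f F = X v := by rw [← hΨf F]; exact Ψ.apply_symm_apply _
    refine ⟨piz K (aeval f (pderiv 0 F)), piz K (aeval f (pderiv 1 F)), ?_, ?_⟩
    · have c0 := chain_rule K f 0 F
      rw [hF, Fin.sum_univ_three, hf0, hf1, hf2, pderiv_lin0, pderiv_lin0] at c0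
      rw [pderiv_X_of_ne (show (2:Fin 3) ≠ 0 by decide)] at c0
      have := congrArg (piz K) c0
      rw [map_add, map_add, map_mul, map_mul, map_mul, piz_zet, piz_zet, map_zero, mul_zero,
        add_zero] at this
      exact this.symm
    · have c1' := chain_rule K f 1 F
      rw [hF, Fin.sum_univ_three, hf0, hf1, hf2, pderiv_lin1, pderiv_lin1] at c1'
      rw [pderiv_X_of_ne (show (2:Fin 3) ≠ 1 by decide)] at c1'
      have := congrArg (piz K) c1'
      rw [map_add, map_add, map_mul, map_mul, map_mul, piz_zet, piz_zet, map_zero, mul_zero,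
        add_zero] at this
      exact this.symm
  obtain ⟨x0, x1, E1, E2⟩ := main 0
  obtain ⟨y0, y1, E3, E4⟩ := main 1
  rw [pderiv_X_self, map_one] at E1
  rw [pderiv_X_of_ne (show (0:Fin 3) ≠ 1 by decide), map_zero] at E2
  rw [pderiv_X_of_ne (show (1:Fin 3) ≠ 0 by decide), map_zero] at E3
  rw [pderiv_X_self, map_one] at E4
  have hdet : IsUnit (a1 * d1 - b1 * c1) := by
    refine IsUnit.of_mul_eq_one (x0 * y1 - x1 * y0) ?_
    linear_combination (y0*b1 + y1*d1) * E1 + E4 - (y0*a1 + y1*c1) * E2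
  refine ⟨Ψ, hcomm, ?_⟩
  refine key_tame K c1.natDegree Ψ a1 b1 c1 d1 le_rfl hdet ?_ ?_ ?_
  · rw [hΨf, aeval_X]; exact hf0
  · rw [hΨf, aeval_X]; exact hf1
  · rw [hΨf, aeval_X]; exact hf2
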